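/- arXiv:1104.1484 — 9 statements merged into one kernel-verified Lean document; each statement's English description precedes it below -/
import Mathlib

section
/- Let Λ be a profinite ring whose open two-sided ideals form a fundamental system of neighborhoods of 0. Let M be a finitely generated left Λ-module and let N be a discrete Λ-module (a Λ-module with the discrete topology on which scalar multiplication Λ × N → N is continuous). Then for every (abstract) Λ-linear map f : M → N there exists an open two-sided ideal 𝔞 of Λ such that f(𝔞M) = 0; in particular f is continuous for the ℐ-adic topology on M. -/
/-- Let `Λ` be a profinite ring whose open two-sided ideals form a
fundamental system of neighborhoods of `0`.  Let `M` be a finitely generated left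
`Λ`-module and `N` a discrete topological `Λ`-module.  Then every abstract
`Λ`-linear map `f : M → N` kills `𝔞M` for some open two-sided ideal `𝔞` of `Λ`
(equivalently, `f` is continuous for the `ℐ`-adic topology on `M`). -/
theorem statement2
    (Λ : Type*) [Ring Λ] [TopologicalSpace Λ] [IsTopologicalRing Λ]
    [CompactSpace Λ] [T2Space Λ] [TotallyDisconnectedSpace Λ]
    (hbasis : (nhds (0 : Λ)).HasBasis
      (fun 𝔞 : TwoSidedIdeal Λ => IsOpen (𝔞 : Set Λ)) (fun 𝔞 => (𝔞 : Set Λ)))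
    (M : Type*) [AddCommGroup M] [Module Λ M] [Module.Finite Λ M]
    (N : Type*) [AddCommGroup N] [Module Λ N] [TopologicalSpace N]
    [DiscreteTopology N] [ContinuousSMul Λ N]
    (f : M →ₗ[Λ] N) :
    ∃ 𝔞 : TwoSidedIdeal Λ, IsOpen (𝔞 : Set Λ) ∧
      ∀ x ∈ Submodule.span Λ {y : M | ∃ a ∈ 𝔞, ∃ m : M, y = a • m}, f x = 0 := by
  classical
  obtain ⟨s, hs⟩ := Module.Finite.fg_top (R := Λ) (M := M)
  -- for each generator, find an open ideal killing its image
  have hkey : ∀ m : M, ∃ 𝔞 : TwoSidedIdeal Λ, IsOpen (𝔞 : Set Λ) ∧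
      ∀ a ∈ 𝔞, a • f m = 0 := by
    intro m
    have hcont : Continuous fun a : Λ => a • f m :=
      continuous_id.smul continuous_const
    have hopen : IsOpen {a : Λ | a • f m = 0} := by
      have : {a : Λ | a • f m = 0} = (fun a : Λ => a • f m) ⁻¹' {0} := rfl
      rw [this]
      exact hcont.isOpen_preimage _ (isOpen_discrete _)
    have hmem : {a : Λ | a • f m = 0} ∈ nhds (0 : Λ) :=
      hopen.mem_nhds (by simp)
    obtain ⟨𝔞, h1, h2⟩ := hbasis.mem_iff.mp hmem
    exact ⟨𝔞, h1, fun a ha => h2 ha⟩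
  choose I hIopen hIkill using hkey
  refine ⟨s.inf I, ?_, ?_⟩
  · -- openness of the finite infimum
    have : ∀ t : Finset M, IsOpen ((t.inf I : TwoSidedIdeal Λ) : Set Λ) := by
      intro t
      induction t using Finset.induction_on with
      | empty =>
        have : ((⊤ : TwoSidedIdeal Λ) : Set Λ) = Set.univ := by
          ext x; simp [SetLike.mem_coe]
        rw [Finset.inf_empty, this]; exact isOpen_univ
      | insert _ _ h ih =>
        rename_i m t'
        rw [Finset.inf_insert]
        have : ((I m ⊓ t'.inf I : TwoSidedIdeal Λ) : Set Λ)
            = (I m : Set Λ) ∩ ((t'.inf I : TwoSidedIdeal Λ) : Set Λ) := by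
          ext x
          simp only [Set.mem_inter_iff, SetLike.mem_coe, TwoSidedIdeal.mem_inf]
        rw [this]
        exact (hIopen m).inter ih
    exact this s
  · -- f vanishes on the span
    intro x hx
    have hgen : {y : M | ∃ a ∈ s.inf I, ∃ m : M, y = a • m} ⊆
        (LinearMap.ker f : Submodule Λ M) := by
      rintro y ⟨a, ha, m, rfl⟩
      -- show ∀ m, ∀ a ∈ s.inf I, a • f m = 0, by span induction
      have hall : ∀ m : M, ∀ a ∈ s.inf I, a • f m = 0 := by
        intro m
        have hm : m ∈ Submodule.span Λ (s : Set M) := hs ▸ Submodule.mem_top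
        induction hm using Submodule.span_induction with
        | mem z hz =>
          intro a ha
          exact hIkill z a ((Finset.inf_le hz : s.inf I ≤ I z) ha)
        | zero => intro a ha; simp
        | add y z _ _ hy hz =>
          intro a ha
          rw [map_add, smul_add, hy a ha, hz a ha, add_zero]
        | smul c z _ hz =>
          intro a ha
          rw [map_smul, smul_smul]
          exact hz (a * c) (TwoSidedIdeal.mul_mem_right _ _ _ ha)
      simp only [SetLike.mem_coe, LinearMap.mem_ker, map_smul]
      exact hall m a ha
    have := Submodule.span_le.mpr hgen hx
    exact this
end

section
/- Let Λ be a profinite ring whose open two-sided ideals form a fundamental system of neighborhoods of 0, and let M be a compact Hausdorff topological Λ-module. Then for every open Λ-submodule N of M there exists an open two-sided ideal 𝔞 of Λ with 𝔞M ⊆ N; that is, the ℐ-adic topology on M is finer than the given topology. -/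
lemma twoSidedIdeal_finset_inf_open {Λ : Type*} [Ring Λ] [TopologicalSpace Λ]
    {ι : Type*} (s : Finset ι) (𝔞 : ι → TwoSidedIdeal Λ)
    (h : ∀ i ∈ s, IsOpen ((𝔞 i : Set Λ))) :
    IsOpen (((s.inf 𝔞 : TwoSidedIdeal Λ) : Set Λ)) := by
  classical
  induction s using Finset.induction_on with
  | empty =>
    have : ((⊤ : TwoSidedIdeal Λ) : Set Λ) = Set.univ := by
      ext x; simp [TwoSidedIdeal.mem_top]
    rw [Finset.inf_empty, this]; exact isOpen_univ
  | @insert a t hat ih =>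
    rw [Finset.inf_insert]
    have hcoe : ((𝔞 a ⊓ t.inf 𝔞 : TwoSidedIdeal Λ) : Set Λ)
        = (𝔞 a : Set Λ) ∩ ((t.inf 𝔞 : TwoSidedIdeal Λ) : Set Λ) := by
      ext x; simp [TwoSidedIdeal.mem_inf]
    rw [hcoe]
    exact (h a (Finset.mem_insert_self a t)).inter
      (ih fun i hit => h i (Finset.mem_insert_of_mem hit))

/-- Let `Λ` be a profinite ring whose open two-sided ideals form a
fundamental system of neighborhoods of `0`, and let `M` be a compact Hausdorff
topological `Λ`-module.  Then every open `Λ`-submodule `N` of `M` contains `𝔞M` for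
some open two-sided ideal `𝔞` of `Λ`; that is, the `ℐ`-adic topology on `M` is finer
than the given topology. -/
theorem statement5
    (Λ : Type*) [Ring Λ] [TopologicalSpace Λ] [IsTopologicalRing Λ]
    [CompactSpace Λ] [T2Space Λ] [TotallyDisconnectedSpace Λ]
    (hbasis : (nhds (0 : Λ)).HasBasis
      (fun 𝔞 : TwoSidedIdeal Λ => IsOpen (𝔞 : Set Λ)) (fun 𝔞 => (𝔞 : Set Λ)))
    (M : Type*) [AddCommGroup M] [Module Λ M] [TopologicalSpace M]
    [IsTopologicalAddGroup M] [CompactSpace M] [T2Space M] [ContinuousSMul Λ M]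
    (N : Submodule Λ M) (hN : IsOpen (N : Set M)) :
    ∃ 𝔞 : TwoSidedIdeal Λ, IsOpen (𝔞 : Set Λ) ∧
      Submodule.span Λ {y : M | ∃ a ∈ 𝔞, ∃ m : M, y = a • m} ≤ N := by
  classical
  have h0 : (N : Set M) ∈ nhds (0 : M) := hN.mem_nhds N.zero_mem
  have key : ∀ m : M, ∃ 𝔞 : TwoSidedIdeal Λ, IsOpen (𝔞 : Set Λ) ∧ ∃ U : Set M,
      U ∈ nhds m ∧ ∀ a ∈ 𝔞, ∀ x ∈ U, a • x ∈ (N : Set M) := by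
    intro m
    have hc : ContinuousAt (fun p : Λ × M => p.1 • p.2) (0, m) :=
      continuous_smul.continuousAt
    have hmem : (fun p : Λ × M => p.1 • p.2) ⁻¹' (N : Set M) ∈ nhds ((0 : Λ), m) := by
      apply hc
      simpa using h0
    rw [nhds_prod_eq, Filter.mem_prod_iff] at hmem
    obtain ⟨s, hs, t, ht, hst⟩ := hmem
    obtain ⟨𝔞, h𝔞, h𝔞s⟩ := hbasis.mem_iff.mp hs
    exact ⟨𝔞, h𝔞, t, ht, fun a ha x hx => hst (Set.mk_mem_prod (h𝔞s ha) hx)⟩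
  choose 𝔞 h𝔞open U hU hUN using key
  obtain ⟨s, -, hs⟩ := isCompact_univ.elim_nhds_subcover U (fun m _ => hU m)
  refine ⟨s.inf 𝔞, twoSidedIdeal_finset_inf_open s 𝔞 (fun i _ => h𝔞open i), ?_⟩
  rw [Submodule.span_le]
  rintro y ⟨a, ha, m, rfl⟩
  have hm : m ∈ ⋃ i ∈ s, U i := hs (Set.mem_univ m)
  simp only [Set.mem_iUnion] at hm
  obtain ⟨i, hi, hmi⟩ := hm
  exact hUN i a ((Finset.inf_le hi : s.inf 𝔞 ≤ 𝔞 i) ha) m hmi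
end

section
/- Let Λ be a profinite ring whose open two-sided ideals form a fundamental system of neighborhoods of 0, and let M be a profinite topological Λ-module that is finitely generated as a Λ-module. Then the submodules 𝔞M, for 𝔞 ranging over the open two-sided ideals of Λ, form a fundamental system of neighborhoods of 0 in M (i.e., the topology of M is the ℐ-adic topology), and the canonical Λ-module homomorphism M → lim_{𝔞} M/𝔞M is bijective. -/
/-- The submodule `𝔞M` of `M` generated by products `a • m` with `a ∈ 𝔞`. -/
def smulSub {Λ : Type*} [Ring Λ] (𝔞 : TwoSidedIdeal Λ)
    (M : Type*) [AddCommGroup M] [Module Λ M] : Submodule Λ M :=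
  Submodule.span Λ {y : M | ∃ a ∈ 𝔞, ∃ m : M, y = a • m}

theorem smulSub_mono {Λ : Type*} [Ring Λ] {M : Type*} [AddCommGroup M] [Module Λ M]
    {𝔞 𝔟 : TwoSidedIdeal Λ} (h : 𝔞 ≤ 𝔟) : smulSub 𝔞 M ≤ smulSub 𝔟 M :=
  Submodule.span_mono (fun x hx => by
    obtain ⟨a, ha, m, rfl⟩ := hx; exact ⟨a, h ha, m, rfl⟩)

lemma mem_smulSub_iff {Λ : Type*} [Ring Λ] {M : Type*} [AddCommGroup M] [Module Λ M]
    (𝔞 : TwoSidedIdeal Λ) {n : ℕ} {m : Fin n → M}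
    (hm : Submodule.span Λ (Set.range m) = ⊤) (x : M) :
    x ∈ smulSub 𝔞 M ↔ ∃ a : Fin n → Λ, (∀ i, a i ∈ 𝔞) ∧ x = ∑ i, a i • m i := by
  let P : Submodule Λ M :=
    { carrier := {x | ∃ a : Fin n → Λ, (∀ i, a i ∈ 𝔞) ∧ x = ∑ i, a i • m i}
      zero_mem' := ⟨0, fun i => 𝔞.zero_mem, by simp⟩
      add_mem' := by
        rintro x y ⟨a, ha, rfl⟩ ⟨b, hb, rfl⟩
        exact ⟨a + b, fun i => 𝔞.add_mem (ha i) (hb i), by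
          simp [add_smul, Finset.sum_add_distrib]⟩
      smul_mem' := by
        rintro c x ⟨a, ha, rfl⟩
        exact ⟨fun i => c * a i, fun i => 𝔞.mul_mem_left _ _ (ha i), by
          simp [Finset.smul_sum, mul_smul]⟩ }
  have hPle : smulSub 𝔞 M ≤ P := by
    rw [smulSub, Submodule.span_le]
    rintro _ ⟨a, ha, y, rfl⟩
    have hy : y ∈ Submodule.span Λ (Set.range m) := hm ▸ Submodule.mem_top
    obtain ⟨c, hc⟩ := (Submodule.mem_span_range_iff_exists_fun Λ).mp hy
    refine ⟨fun i => a * c i, fun i => 𝔞.mul_mem_right _ _ ha, ?_⟩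
    rw [← hc, Finset.smul_sum]
    simp [mul_smul]
  have hleP : P ≤ smulSub 𝔞 M := by
    rintro x ⟨a, ha, rfl⟩
    exact Submodule.sum_mem _ fun i _ =>
      Submodule.subset_span ⟨a i, ha i, m i, rfl⟩
  exact ⟨fun h => hPle h, fun h => hleP h⟩

/-- Let `Λ` be a profinite ring whose open two-sided ideals form a
fundamental system of neighborhoods of `0`, and let `M` be a profinite topological
`Λ`-module that is finitely generated over `Λ`.  Then the submodules `𝔞M`, for `𝔞`
an open two-sided ideal of `Λ`, form a fundamental system of neighborhoods of `0`
in `M`, and the canonical map `M → lim_𝔞 M/𝔞M` is bijective. -/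
theorem statement7
    (Λ : Type*) [Ring Λ] [TopologicalSpace Λ] [IsTopologicalRing Λ]
    [CompactSpace Λ] [T2Space Λ] [TotallyDisconnectedSpace Λ]
    (hbasis : (nhds (0 : Λ)).HasBasis
      (fun 𝔞 : TwoSidedIdeal Λ => IsOpen (𝔞 : Set Λ)) (fun 𝔞 => (𝔞 : Set Λ)))
    (M : Type*) [AddCommGroup M] [Module Λ M] [Module.Finite Λ M] [TopologicalSpace M]
    [IsTopologicalAddGroup M] [CompactSpace M] [T2Space M] [TotallyDisconnectedSpace M]
    [ContinuousSMul Λ M] :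
    (nhds (0 : M)).HasBasis (fun 𝔞 : TwoSidedIdeal Λ => IsOpen (𝔞 : Set Λ))
      (fun 𝔞 => (smulSub 𝔞 M : Set M)) ∧
    Function.Bijective (fun x : M =>
      (⟨fun 𝔞 : {𝔞 : TwoSidedIdeal Λ // IsOpen ((𝔞 : TwoSidedIdeal Λ) : Set Λ)} =>
          Submodule.Quotient.mk (p := smulSub 𝔞.1 M) x,
        fun _ _ _ => rfl⟩ :
        {φ : ∀ 𝔞 : {𝔞 : TwoSidedIdeal Λ // IsOpen ((𝔞 : TwoSidedIdeal Λ) : Set Λ)},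
            M ⧸ smulSub 𝔞.1 M //
          ∀ (𝔞 𝔟 : {𝔞 : TwoSidedIdeal Λ // IsOpen ((𝔞 : TwoSidedIdeal Λ) : Set Λ)})
            (h : 𝔞.1 ≤ 𝔟.1),
            Submodule.mapQ (smulSub 𝔞.1 M) (smulSub 𝔟.1 M) LinearMap.id
              (fun x hx => smulSub_mono h hx) (φ 𝔞) = φ 𝔟})) := by
  obtain ⟨n, m, hm⟩ := Module.Finite.exists_fin (R := Λ) (M := M)
  set f : (Fin n → Λ) → M := fun a => ∑ i, a i • m i with hf
  have hfcont : Continuous f :=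
    continuous_finset_sum _ fun i _ => (continuous_apply i).smul continuous_const
  have hmem : ∀ (𝔞 : TwoSidedIdeal Λ) (x : M),
      x ∈ smulSub 𝔞 M ↔ ∃ a : Fin n → Λ, (∀ i, a i ∈ 𝔞) ∧ x = f a :=
    fun 𝔞 x => mem_smulSub_iff 𝔞 hm x
  -- open ideals are closed
  have hclosedΛ : ∀ 𝔞 : TwoSidedIdeal Λ, IsOpen (𝔞 : Set Λ) → IsClosed (𝔞 : Set Λ) := by
    intro 𝔞 h
    let A : AddSubgroup Λ :=
      { carrier := 𝔞
        add_mem' := fun ha hb => 𝔞.add_mem ha hb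
        zero_mem' := 𝔞.zero_mem
        neg_mem' := fun ha => 𝔞.neg_mem ha }
    exact A.isClosed_of_isOpen h
  -- 𝔞M is compact
  have hcomp : ∀ 𝔞 : TwoSidedIdeal Λ, IsOpen (𝔞 : Set Λ) →
      IsCompact (smulSub 𝔞 M : Set M) := by
    intro 𝔞 h
    have heq : (smulSub 𝔞 M : Set M) = f '' Set.pi Set.univ (fun _ : Fin n => (𝔞 : Set Λ)) := by
      ext x
      constructor
      · intro hx
        obtain ⟨a, ha, rfl⟩ := (hmem 𝔞 x).mp hx
        exact ⟨a, fun i _ => ha i, rfl⟩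
      · rintro ⟨a, ha, rfl⟩
        exact (hmem 𝔞 _).mpr ⟨a, fun i => ha i trivial, rfl⟩
    rw [heq]
    exact ((isClosed_set_pi fun i _ => hclosedΛ 𝔞 h).isCompact).image hfcont
  -- 𝔞M is open
  have hopen : ∀ 𝔞 : TwoSidedIdeal Λ, IsOpen (𝔞 : Set Λ) →
      IsOpen (smulSub 𝔞 M : Set M) := by
    intro 𝔞 h
    set N : Set M := (smulSub 𝔞 M : Set M) with hN
    have hNc : IsClosed N := (hcomp 𝔞 h).isClosed
    -- finitely many coset representatives in Λ
    obtain ⟨T, hT⟩ : ∃ T : Finset Λ, ∀ x : Λ, ∃ t ∈ T, x - t ∈ 𝔞 := by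
      obtain ⟨T, hT⟩ := IsCompact.elim_finite_subcover isCompact_univ
        (fun t : Λ => (fun x => x - t) ⁻¹' (𝔞 : Set Λ))
        (fun t => h.preimage (continuous_id.sub continuous_const))
        (fun x _ => Set.mem_iUnion.mpr ⟨x, by simp [𝔞.zero_mem]⟩)
      exact ⟨T, fun x => by
        obtain ⟨t, ht, hxt⟩ := Set.mem_iUnion₂.mp (hT (Set.mem_univ x))
        exact ⟨t, ht, hxt⟩⟩
    set D : Set M := f '' Set.pi Set.univ (fun _ : Fin n => (T : Set Λ)) with hD
    have hDfin : D.Finite := (Set.Finite.pi fun _ => T.finite_toSet).image f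
    have hcompl : Nᶜ = ⋃ y ∈ D ∩ Nᶜ, (fun z => y + z) '' N := by
      ext x
      constructor
      · intro hx
        have hxspan : x ∈ Submodule.span Λ (Set.range m) := hm ▸ Submodule.mem_top
        obtain ⟨b, hb⟩ := (Submodule.mem_span_range_iff_exists_fun Λ).mp hxspan
        choose t ht h𝔞t using fun i => hT (b i)
        have hft : f (fun i => b i - t i) ∈ N := by
          rw [hN]
          exact (hmem 𝔞 _).mpr ⟨fun i => b i - t i, h𝔞t, rfl⟩
        have hxeq : x = f t + f (fun i => b i - t i) := by
          rw [← hb]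
          show ∑ i, b i • m i = ∑ i, t i • m i + ∑ i, (b i - t i) • m i
          rw [← Finset.sum_add_distrib]
          exact Finset.sum_congr rfl fun i _ => by rw [sub_smul]; abel
        have hftN : f t ∉ N := by
          intro hmemN
          exact hx (hxeq ▸ Submodule.add_mem _ hmemN hft)
        exact Set.mem_biUnion ⟨⟨t, fun i _ => ht i, rfl⟩, hftN⟩
          ⟨f (fun i => b i - t i), hft, hxeq.symm⟩
      · rintro hx hxN
        obtain ⟨y, ⟨hyD, hyN⟩, z, hzN, rfl⟩ := Set.mem_iUnion₂.mp hx
        exact hyN (by simpa [hN] using Submodule.sub_mem _ hxN hzN)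
    have : IsClosed Nᶜ := by
      rw [hcompl]
      exact Set.Finite.isClosed_biUnion (hDfin.inter_of_left _)
        fun y _ => (Homeomorph.addLeft y).isClosedMap _ hNc
    exact isClosed_compl_iff.mp this
  -- the neighborhood basis of 0 in M
  have hbasisM : (nhds (0 : M)).HasBasis (fun 𝔞 : TwoSidedIdeal Λ => IsOpen (𝔞 : Set Λ))
      (fun 𝔞 => (smulSub 𝔞 M : Set M)) := by
    constructor
    intro U
    constructor
    · intro hU
      obtain ⟨U', hU'U, hU'open, h0U'⟩ := mem_nhds_iff.mp hU
      obtain ⟨W, hWclopen, h0W, hWU'⟩ := compact_exists_isClopen_in_isOpen hU'open h0U'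
      obtain ⟨H, hHW⟩ :=
        IsTopologicalAddGroup.exist_openAddSubgroup_sub_clopen_nhds_of_zero hWclopen h0W
      have hpre : ∀ i : Fin n, ∃ 𝔞 : TwoSidedIdeal Λ, IsOpen (𝔞 : Set Λ) ∧
          ∀ a ∈ 𝔞, a • m i ∈ H := by
        intro i
        have hc : Continuous (fun a : Λ => a • m i) := continuous_id.smul continuous_const
        have : (fun a : Λ => a • m i) ⁻¹' (H : Set M) ∈ nhds (0 : Λ) := by
          apply (H.isOpen.preimage hc).mem_nhds
          simp only [Set.mem_preimage, zero_smul]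
          exact H.zero_mem
        obtain ⟨𝔞, h𝔞, hsub⟩ := hbasis.mem_iff.mp this
        exact ⟨𝔞, h𝔞, fun a ha => hsub ha⟩
      choose 𝔞 h𝔞open h𝔞H using hpre
      refine ⟨⨅ i, 𝔞 i, ?_, ?_⟩
      · have : ((⨅ i, 𝔞 i : TwoSidedIdeal Λ) : Set Λ) = ⋂ i, ((𝔞 i : Set Λ)) := by
          ext x
          simp [TwoSidedIdeal.mem_iInf Λ]
        rw [this]
        exact isOpen_iInter_of_finite fun i => h𝔞open i
      · intro x hx
        obtain ⟨a, ha, rfl⟩ := (hmem _ x).mp hx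
        have : f a ∈ H := by
          rw [hf]
          exact AddSubgroup.sum_mem _ fun i _ =>
            h𝔞H i (a i) (((TwoSidedIdeal.mem_iInf Λ).mp (ha i)) i)
        exact hU'U (hWU' (hHW this))
    · rintro ⟨𝔞, h𝔞, hsub⟩
      exact Filter.mem_of_superset
        ((hopen 𝔞 h𝔞).mem_nhds (Submodule.zero_mem _)) hsub
  refine ⟨hbasisM, ?_, ?_⟩
  · -- injective
    intro x y hxy
    have h1 : ∀ 𝔞 : {𝔞 : TwoSidedIdeal Λ // IsOpen ((𝔞 : TwoSidedIdeal Λ) : Set Λ)},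
        x - y ∈ smulSub 𝔞.1 M := by
      intro 𝔞
      have := congrArg (fun z => z.1 𝔞) hxy
      exact (Submodule.Quotient.eq _).mp this
    by_contra hne
    have hxy0 : x - y ≠ 0 := sub_ne_zero.mpr hne
    have hU : {x - y}ᶜ ∈ nhds (0 : M) :=
      isOpen_compl_singleton.mem_nhds (by simp [hxy0.symm])
    obtain ⟨𝔞, h𝔞, hsub⟩ := hbasisM.mem_iff.mp hU
    exact hsub (h1 ⟨𝔞, h𝔞⟩) rfl
  · -- surjective
    rintro ⟨φ, hφ⟩
    have htop : IsOpen ((⊤ : TwoSidedIdeal Λ) : Set Λ) := by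
      have : ((⊤ : TwoSidedIdeal Λ) : Set Λ) = Set.univ :=
        Set.eq_univ_iff_forall.mpr fun x => SetLike.mem_coe.mpr (TwoSidedIdeal.mem_top Λ)
      rw [this]; exact isOpen_univ
    have hne : Nonempty {𝔞 : TwoSidedIdeal Λ // IsOpen ((𝔞 : TwoSidedIdeal Λ) : Set Λ)} :=
      ⟨⟨⊤, htop⟩⟩
    set S : {𝔞 : TwoSidedIdeal Λ // IsOpen ((𝔞 : TwoSidedIdeal Λ) : Set Λ)} → Set M :=
      fun 𝔞 => {x | Submodule.Quotient.mk (p := smulSub 𝔞.1 M) x = φ 𝔞} with hS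
    have hSne : ∀ 𝔞, (S 𝔞).Nonempty := fun 𝔞 => Submodule.Quotient.mk_surjective _ (φ 𝔞)
    have hScomp : ∀ 𝔞, IsCompact (S 𝔞) := by
      intro 𝔞
      obtain ⟨x₀, hx₀⟩ := hSne 𝔞
      have : S 𝔞 = (fun y => x₀ + y) '' (smulSub 𝔞.1 M : Set M) := by
        ext x
        constructor
        · intro hx
          refine ⟨x - x₀, ?_, by simp⟩
          have : Submodule.Quotient.mk (p := smulSub 𝔞.1 M) x
              = Submodule.Quotient.mk x₀ := by rw [hx, ← hx₀]
          exact (Submodule.Quotient.eq _).mp this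
        · rintro ⟨y, hy, rfl⟩
          show Submodule.Quotient.mk (x₀ + y) = φ 𝔞
          rw [← hx₀]
          exact (Submodule.Quotient.eq _).mpr (by simpa using hy)
      rw [this]
      exact (hcomp _ 𝔞.2).image (continuous_const.add continuous_id)
    have hdir : Directed (· ⊇ ·) S := by
      intro 𝔞 𝔟
      have hinfopen : IsOpen ((𝔞.1 ⊓ 𝔟.1 : TwoSidedIdeal Λ) : Set Λ) := by
        have : ((𝔞.1 ⊓ 𝔟.1 : TwoSidedIdeal Λ) : Set Λ) = (𝔞.1 : Set Λ) ∩ (𝔟.1 : Set Λ) := by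
          ext x; simp [TwoSidedIdeal.mem_inf Λ]
        rw [this]; exact 𝔞.2.inter 𝔟.2
      refine ⟨⟨𝔞.1 ⊓ 𝔟.1, hinfopen⟩, ?_, ?_⟩
      · intro x hx
        have h1 := hφ ⟨𝔞.1 ⊓ 𝔟.1, hinfopen⟩ 𝔞 inf_le_left
        show Submodule.Quotient.mk (p := smulSub 𝔞.1 M) x = φ 𝔞
        rw [← h1, ← hx, Submodule.mapQ_apply, LinearMap.id_apply]
      · intro x hx
        have h1 := hφ ⟨𝔞.1 ⊓ 𝔟.1, hinfopen⟩ 𝔟 inf_le_right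
        show Submodule.Quotient.mk (p := smulSub 𝔟.1 M) x = φ 𝔟
        rw [← h1, ← hx, Submodule.mapQ_apply, LinearMap.id_apply]
    obtain ⟨x, hx⟩ := IsCompact.nonempty_iInter_of_directed_nonempty_isCompact_isClosed
      S hdir hSne hScomp (fun 𝔞 => (hScomp 𝔞).isClosed)
    exact ⟨x, Subtype.ext (funext fun 𝔞 => Set.mem_iInter.mp hx 𝔞)⟩
end

section
/- Let Λ be a profinite ring whose open two-sided ideals form a fundamental system of neighborhoods of 0, and let M be a finitely generated Λ-module. If τ₁ and τ₂ are two topologies on M each of which makes M a profinite topological Λ-module, then τ₁ = τ₂ (both coincide with the ℐ-adic topology). -/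
open Filter Set

section Aux

variable {Λ : Type*} [Ring Λ] [TopologicalSpace Λ] [IsTopologicalRing Λ]
  [CompactSpace Λ] [T2Space Λ]
variable {M : Type*} [AddCommGroup M] [Module Λ M]

/-- coercion of an inf of two-sided ideals -/
lemma twoSidedIdeal_coe_inf (I J : TwoSidedIdeal Λ) :
    ((I ⊓ J : TwoSidedIdeal Λ) : Set Λ) = (I : Set Λ) ∩ (J : Set Λ) :=
  Set.ext fun x => by
    simpa [Set.mem_inter_iff] using (TwoSidedIdeal.mem_inf (I := I) (J := J) (x := x))

lemma twoSidedIdeal_finset_inf_open_s8 {ι : Type*} (t : Finset ι)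
    (f : ι → TwoSidedIdeal Λ) (hf : ∀ i ∈ t, IsOpen ((f i : Set Λ))) :
    IsOpen ((t.inf f : TwoSidedIdeal Λ) : Set Λ) := by
  classical
  induction t using Finset.induction_on with
  | empty =>
      have h : ((⊤ : TwoSidedIdeal Λ) : Set Λ) = Set.univ :=
        Set.eq_univ_of_forall fun x => SetLike.mem_coe.mpr (TwoSidedIdeal.mem_top Λ)
      rw [Finset.inf_empty, h]; exact isOpen_univ
  | @insert a s hnot ih =>
      rw [Finset.inf_insert, twoSidedIdeal_coe_inf]
      exact (hf a (Finset.mem_insert_self a s)).inter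
        (ih fun i hi => hf i (Finset.mem_insert_of_mem hi))

/-- In a profinite additive group, every clopen neighborhood of `0` contains an
open set containing `0` closed under addition (an open subgroup). -/
lemma aux_addSubgroup [TopologicalSpace M] [IsTopologicalAddGroup M] [CompactSpace M]
    {W : Set M} (hW : IsClopen W) (h0 : (0 : M) ∈ W) :
    ∃ V : Set M, IsOpen V ∧ (0 : M) ∈ V ∧ V ⊆ W ∧
      ∀ a b : M, a ∈ V → b ∈ V → a + b ∈ V := by
  haveI : CompactSpace (Multiplicative M) := ‹CompactSpace M›
  obtain ⟨H, hH⟩ := IsTopologicalAddGroup.exist_openAddSubgroup_sub_clopen_nhds_of_zero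
    (G := M) hW h0
  exact ⟨(H : Set M), H.isOpen, H.zero_mem, hH,
    fun a b ha hb => H.add_mem ha hb⟩

/-- Every neighborhood of `0` in a profinite `Λ`-module contains `𝔞M` for some
open two-sided ideal `𝔞`. -/
lemma aux_nhds (τ : TopologicalSpace M)
    (ht1 : @IsTopologicalAddGroup M τ _) (ht2 : @CompactSpace M τ)
    (ht3 : @T2Space M τ) (ht4 : @TotallyDisconnectedSpace M τ)
    (ht5 : @ContinuousSMul Λ M _ _ τ)
    (hbasis : (nhds (0 : Λ)).HasBasis
      (fun 𝔞 : TwoSidedIdeal Λ => IsOpen (𝔞 : Set Λ)) (fun 𝔞 => (𝔞 : Set Λ)))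
    {U : Set M} (hU : U ∈ @nhds M τ 0) :
    ∃ 𝔞 : TwoSidedIdeal Λ, IsOpen (𝔞 : Set Λ) ∧
      (((TwoSidedIdeal.asIdeal 𝔞) • ⊤ : Submodule Λ M) : Set M) ⊆ U := by
  classical
  letI := τ
  obtain ⟨U', hU'U, hU'o, hU'0⟩ := mem_nhds_iff.mp hU
  obtain ⟨W, hWclopen, hW0, hWU'⟩ := compact_exists_isClopen_in_isOpen hU'o hU'0
  obtain ⟨V, hVo, hV0, hVW, hVadd⟩ := aux_addSubgroup hWclopen hW0
  -- for each m, an open ideal and a neighborhood of m whose product lies in V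
  have step : ∀ m : M, ∃ (𝔞 : TwoSidedIdeal Λ) (v : Set M),
      IsOpen (𝔞 : Set Λ) ∧ IsOpen v ∧ m ∈ v ∧
      ∀ a ∈ 𝔞, ∀ x ∈ v, a • x ∈ V := by
    intro m
    have hP : IsOpen ((fun p : Λ × M => p.1 • p.2) ⁻¹' V) :=
      hVo.preimage continuous_smul
    have hmem : ((0 : Λ), m) ∈ (fun p : Λ × M => p.1 • p.2) ⁻¹' V := by
      simpa using hV0
    obtain ⟨u, v, huo, hvo, h0u, hmv, huv⟩ := isOpen_prod_iff.mp hP 0 m hmem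
    obtain ⟨𝔞, h𝔞o, h𝔞u⟩ := hbasis.mem_iff.mp (huo.mem_nhds h0u)
    exact ⟨𝔞, v, h𝔞o, hvo, hmv, fun a ha x hx =>
      Set.mem_preimage.mp (huv (Set.mk_mem_prod (h𝔞u ha) hx))⟩
  choose 𝔞f vf h𝔞o hvo hmv hkey using step
  obtain ⟨t, ht⟩ := isCompact_univ.elim_finite_subcover vf hvo
    (fun x _ => Set.mem_iUnion.mpr ⟨x, hmv x⟩)
  refine ⟨t.inf 𝔞f, twoSidedIdeal_finset_inf_open_s8 t 𝔞f (fun i _ => h𝔞o i), ?_⟩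
  have key : ∀ a ∈ t.inf 𝔞f, ∀ x : M, a • x ∈ V := by
    intro a ha x
    obtain ⟨_, ⟨m, rfl⟩, hx2⟩ := ht (Set.mem_univ x)
    obtain ⟨_, ⟨hm, rfl⟩, hx3⟩ := hx2
    exact hkey m a (TwoSidedIdeal.le_iff.mp (Finset.inf_le hm) ha) x hx3
  intro x hx
  have hxV : x ∈ V := by
    refine Submodule.smul_induction_on hx ?_ ?_
    · intro r hr n _
      exact key r (TwoSidedIdeal.mem_asIdeal.mp hr) n
    · intro x y hx hy
      exact hVadd x y hx hy
  exact hU'U (hWU' (hVW hxV))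

/-- For `M` finitely generated and an open two-sided ideal `𝔞`, the submodule
`𝔞M` is open in any profinite module topology. -/
lemma aux_open [Module.Finite Λ M] (τ : TopologicalSpace M)
    (ht1 : @IsTopologicalAddGroup M τ _) (ht2 : @CompactSpace M τ)
    (ht3 : @T2Space M τ) (ht5 : @ContinuousSMul Λ M _ _ τ)
    (𝔞 : TwoSidedIdeal Λ) (h𝔞 : IsOpen (𝔞 : Set Λ)) :
    @IsOpen M τ (((TwoSidedIdeal.asIdeal 𝔞) • ⊤ : Submodule Λ M) : Set M) := by
  letI := τ
  obtain ⟨n, f, hf⟩ := Module.Finite.exists_fin (R := Λ) (M := M)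
  let φ : (Fin n → Λ) →ₗ[Λ] M :=
    { toFun := fun c => ∑ i, c i • f i
      map_add' := by
        intro a b
        simp [add_smul, Finset.sum_add_distrib]
      map_smul' := by
        intro r c
        simp [Finset.smul_sum, smul_smul] }
  have hφ : ∀ c, φ c = ∑ i, c i • f i := fun c => rfl
  have hsurj : Function.Surjective φ := by
    intro m
    have hm : m ∈ Submodule.span Λ (Set.range f) := hf ▸ Submodule.mem_top
    obtain ⟨c, hc⟩ := (Submodule.mem_span_range_iff_exists_fun Λ).mp hm
    exact ⟨c, hc⟩
  have hφcont : Continuous φ := by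
    have : (φ : (Fin n → Λ) → M) = fun c => ∑ i, c i • f i := funext hφ
    rw [this]
    exact continuous_finset_sum _ fun i _ => (continuous_apply i).smul continuous_const
  set S : Set (Fin n → Λ) := {c | ∀ i, c i ∈ 𝔞} with hS
  have hSo : IsOpen S := by
    have : S = ⋂ i, (fun c : Fin n → Λ => c i) ⁻¹' (𝔞 : Set Λ) := by
      ext c; simp [hS]
    rw [this]
    exact isOpen_iInter_of_finite fun i => h𝔞.preimage (continuous_apply i)
  have himg : φ '' S = (((TwoSidedIdeal.asIdeal 𝔞) • ⊤ : Submodule Λ M) : Set M) := by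
    apply Set.Subset.antisymm
    · rintro _ ⟨c, hc, rfl⟩
      rw [hφ]
      exact Submodule.sum_mem _ fun i _ =>
        Submodule.smul_mem_smul (TwoSidedIdeal.mem_asIdeal.mpr (hc i)) trivial
    · intro x hx
      refine Submodule.smul_induction_on hx ?_ ?_
      · intro r hr m _
        obtain ⟨c, rfl⟩ := hsurj m
        refine ⟨r • c, fun i => ?_, (map_smul φ r c)⟩
        simpa [Pi.smul_apply, smul_eq_mul] using
          𝔞.mul_mem_right r (c i) (TwoSidedIdeal.mem_asIdeal.mp hr)
      · rintro _ _ ⟨c, hc, rfl⟩ ⟨c', hc', rfl⟩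
        exact ⟨c + c', fun i => 𝔞.add_mem (hc i) (hc' i), map_add φ c c'⟩
  rw [← himg]
  have hquot : Topology.IsQuotientMap φ :=
    (hφcont.isClosedMap).isQuotientMap hφcont hsurj
  rw [← hquot.isOpen_preimage]
  rw [isOpen_iff_forall_mem_open]
  intro x hx
  obtain ⟨c, hc, hcx⟩ := hx
  refine ⟨(fun y => y - x + c) ⁻¹' S, ?_, hSo.preimage (by continuity), by simp [hc]⟩
  intro y hy
  refine ⟨y - x + c, hy, ?_⟩
  have : φ (y - x + c) = φ y - φ x + φ c := by simp [map_add, map_sub]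
  rw [this, hcx]
  abel

end Aux

/-- Let `Λ` be a profinite ring whose open two-sided ideals form a
fundamental system of neighborhoods of `0`, and let `M` be a finitely generated
`Λ`-module.  If `τ₁` and `τ₂` are two topologies on `M` each of which makes `M` a
profinite topological `Λ`-module, then `τ₁ = τ₂`. -/
theorem statement8
    (Λ : Type*) [Ring Λ] [TopologicalSpace Λ] [IsTopologicalRing Λ]
    [CompactSpace Λ] [T2Space Λ] [TotallyDisconnectedSpace Λ]
    (hbasis : (nhds (0 : Λ)).HasBasis
      (fun 𝔞 : TwoSidedIdeal Λ => IsOpen (𝔞 : Set Λ)) (fun 𝔞 => (𝔞 : Set Λ)))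
    (M : Type*) [AddCommGroup M] [Module Λ M] [Module.Finite Λ M]
    (τ₁ τ₂ : TopologicalSpace M)
    (h₁ : @IsTopologicalAddGroup M τ₁ _ ∧ @CompactSpace M τ₁ ∧ @T2Space M τ₁ ∧
      @TotallyDisconnectedSpace M τ₁ ∧ @ContinuousSMul Λ M _ _ τ₁)
    (h₂ : @IsTopologicalAddGroup M τ₂ _ ∧ @CompactSpace M τ₂ ∧ @T2Space M τ₂ ∧
      @TotallyDisconnectedSpace M τ₂ ∧ @ContinuousSMul Λ M _ _ τ₂) :
    τ₁ = τ₂ := by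
  obtain ⟨t1a, t1b, t1c, t1d, t1e⟩ := h₁
  obtain ⟨t2a, t2b, t2c, t2d, t2e⟩ := h₂
  refine IsTopologicalAddGroup.ext t1a t2a (le_antisymm ?_ ?_)
  · intro U hU
    obtain ⟨𝔞, h𝔞o, h𝔞U⟩ :=
      aux_nhds (Λ := Λ) (M := M) τ₂ t2a t2b t2c t2d t2e hbasis hU
    have hopen := aux_open (Λ := Λ) (M := M) τ₁ t1a t1b t1c t1e 𝔞 h𝔞o
    exact (@mem_nhds_iff M τ₁ 0 U).mpr
      ⟨_, h𝔞U, hopen, Submodule.zero_mem _⟩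
  · intro U hU
    obtain ⟨𝔞, h𝔞o, h𝔞U⟩ :=
      aux_nhds (Λ := Λ) (M := M) τ₁ t1a t1b t1c t1d t1e hbasis hU
    have hopen := aux_open (Λ := Λ) (M := M) τ₂ t2a t2b t2c t2e 𝔞 h𝔞o
    exact (@mem_nhds_iff M τ₂ 0 U).mpr
      ⟨_, h𝔞U, hopen, Submodule.zero_mem _⟩
end

section
/- Let Λ be a profinite ring whose open two-sided ideals form a fundamental system of neighborhoods of 0. Let P be a profinite topological Λ-module that is finitely generated over Λ and which is a projective object in the category of profinite topological Λ-modules, in the sense that for every continuous surjective Λ-linear map ε : M → N of profinite topological Λ-modules and every continuous Λ-linear map α : P → N there exists a continuous Λ-linear map β : P → M with ε ∘ β = α. Then P is a projective Λ-module in the abstract sense (a direct summand of a finite free Λ-module). -/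
universe u

/-- Let `Λ` be a profinite ring whose open two-sided ideals form a
fundamental system of neighborhoods of `0`.  Let `P` be a profinite topological
`Λ`-module, finitely generated over `Λ`, which is a projective object in the category
of profinite topological `Λ`-modules (every continuous surjection `ε : M ↠ N` and
continuous map `α : P → N` admit a continuous lift `β : P → M` with `ε ∘ β = α`).
Then `P` is a projective `Λ`-module in the abstract sense. -/
theorem statement9
    (Λ : Type u) [Ring Λ] [TopologicalSpace Λ] [IsTopologicalRing Λ]
    [CompactSpace Λ] [T2Space Λ] [TotallyDisconnectedSpace Λ]
    (hbasis : (nhds (0 : Λ)).HasBasis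
      (fun 𝔞 : TwoSidedIdeal Λ => IsOpen (𝔞 : Set Λ)) (fun 𝔞 => (𝔞 : Set Λ)))
    (P : Type u) [AddCommGroup P] [Module Λ P] [Module.Finite Λ P]
    [TopologicalSpace P] [IsTopologicalAddGroup P] [CompactSpace P] [T2Space P]
    [TotallyDisconnectedSpace P] [ContinuousSMul Λ P]
    (hproj : ∀ (M N : Type u) [AddCommGroup M] [Module Λ M] [TopologicalSpace M]
      [IsTopologicalAddGroup M] [CompactSpace M] [T2Space M] [TotallyDisconnectedSpace M]
      [ContinuousSMul Λ M]
      [AddCommGroup N] [Module Λ N] [TopologicalSpace N] [IsTopologicalAddGroup N]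
      [CompactSpace N] [T2Space N] [TotallyDisconnectedSpace N] [ContinuousSMul Λ N]
      (ε : M →ₗ[Λ] N), Continuous ε → Function.Surjective ε →
      ∀ α : P →ₗ[Λ] N, Continuous α →
        ∃ β : P →ₗ[Λ] M, Continuous β ∧ ε.comp β = α) :
    Module.Projective Λ P := by
  obtain ⟨n, f, hf⟩ := Module.Finite.exists_fin' Λ P
  have hfc : Continuous f := by
    have : (f : (Fin n → Λ) → P) = fun v =>
        ∑ i, v i • f (fun j => if i = j then 1 else 0) := by
      funext v
      exact LinearMap.pi_apply_eq_sum_univ f v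
    rw [this]
    exact continuous_finset_sum _ fun i _ =>
      ((continuous_apply i).smul continuous_const)
  obtain ⟨β, hβc, hβ⟩ := hproj (Fin n → Λ) P f hfc hf LinearMap.id continuous_id
  exact Module.Projective.of_split β f hβ
end

section
/- Let Λ be a profinite ring whose open two-sided ideals form a fundamental system of neighborhoods of 0. Let P be a finitely generated projective Λ-module, endowed with a topology making it a profinite topological Λ-module (e.g., the ℐ-adic topology). Then for every continuous surjective Λ-linear map ε : M → N of profinite topological Λ-modules and every continuous Λ-linear map α : P → N, there exists a continuous Λ-linear map β : P → M with ε ∘ β = α; that is, P is a projective object in the category of profinite topological Λ-modules with continuous Λ-linear maps. -/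
/-- Any linear map from `Fin n → Λ` to a topological `Λ`-module is continuous. -/
lemma continuous_of_pi_linear
    {Λ : Type*} [Ring Λ] [TopologicalSpace Λ]
    {M : Type*} [AddCommGroup M] [Module Λ M] [TopologicalSpace M]
    [IsTopologicalAddGroup M] [ContinuousSMul Λ M]
    {n : ℕ} (g : (Fin n → Λ) →ₗ[Λ] M) : Continuous g := by
  have h : ∀ v : Fin n → Λ,
      g v = ∑ i, v i • g (fun j => if i = j then (1 : Λ) else 0) := by
    intro v
    conv_lhs => rw [pi_eq_sum_univ v]
    rw [map_sum]
    simp only [map_smul]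
  have h2 : ⇑g = fun v => ∑ i, v i • g (fun j => if i = j then (1 : Λ) else 0) :=
    funext h
  rw [h2]
  exact continuous_finset_sum _ fun i _ =>
    (continuous_apply i).smul continuous_const

/-- Let `Λ` be a profinite ring whose open two-sided ideals form a
fundamental system of neighborhoods of `0`, and let `P` be a finitely generated
projective `Λ`-module endowed with a topology making it a profinite topological
`Λ`-module.  Then for every continuous surjective `Λ`-linear map `ε : M → N` of
profinite topological `Λ`-modules and every continuous `Λ`-linear `α : P → N`
there is a continuous `Λ`-linear `β : P → M` with `ε ∘ β = α`; that is, `P` is a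
projective object in the category of profinite topological `Λ`-modules. -/
theorem statement10
    (Λ : Type*) [Ring Λ] [TopologicalSpace Λ] [IsTopologicalRing Λ]
    [CompactSpace Λ] [T2Space Λ] [TotallyDisconnectedSpace Λ]
    (hbasis : (nhds (0 : Λ)).HasBasis
      (fun 𝔞 : TwoSidedIdeal Λ => IsOpen (𝔞 : Set Λ)) (fun 𝔞 => (𝔞 : Set Λ)))
    (P : Type*) [AddCommGroup P] [Module Λ P] [Module.Finite Λ P] [Module.Projective Λ P]
    [TopologicalSpace P] [IsTopologicalAddGroup P] [CompactSpace P] [T2Space P]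
    [TotallyDisconnectedSpace P] [ContinuousSMul Λ P]
    (M N : Type*) [AddCommGroup M] [Module Λ M] [TopologicalSpace M]
    [IsTopologicalAddGroup M] [CompactSpace M] [T2Space M] [TotallyDisconnectedSpace M]
    [ContinuousSMul Λ M]
    [AddCommGroup N] [Module Λ N] [TopologicalSpace N] [IsTopologicalAddGroup N]
    [CompactSpace N] [T2Space N] [TotallyDisconnectedSpace N] [ContinuousSMul Λ N]
    (ε : M →ₗ[Λ] N) (hεc : Continuous ε) (hεs : Function.Surjective ε)
    (α : P →ₗ[Λ] N) (hα : Continuous α) :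
    ∃ β : P →ₗ[Λ] M, Continuous β ∧ ε.comp β = α := by
  -- algebraic lifting via projectivity
  obtain ⟨β, hβ⟩ := Module.projective_lifting_property ε α hεs
  refine ⟨β, ?_, hβ⟩
  -- continuity: every linear map from the f.g. profinite module P is continuous
  obtain ⟨n, π, hπs⟩ := Module.Finite.exists_fin' Λ P
  have hπc : Continuous π := continuous_of_pi_linear π
  have hq : Topology.IsQuotientMap π := (hπc.isClosedMap).isQuotientMap hπc hπs
  rw [hq.continuous_iff]
  exact continuous_of_pi_linear (β.comp π)
end

section
/- Let Λ be a profinite ring, let G be a profinite group, and let M be a profinite topological Λ-module equipped with a continuous Λ-linear action of G (i.e., the map G × M → M is continuous and g·(λ·x) = λ·(g·x) for all g ∈ G, λ ∈ Λ, x ∈ M). Then every open Λ-submodule of M contains an open Λ-submodule that is stable under the G-action; consequently M has a fundamental system of neighborhoods of 0 consisting of open G-stable Λ-submodules. -/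
open Set Filter

/-- Compactness lemma: if `K` is compact acting continuously on `M`, `N` is open and
`k • m ∈ N` for all `k`, then there is a neighborhood `W` of `m` with `k • x ∈ N`
for all `x ∈ W`, `k ∈ K`. -/
lemma aux_smul_nhds {K : Type*} [TopologicalSpace K] [CompactSpace K]
    {M : Type*} [TopologicalSpace M] [SMul K M]
    (hc : Continuous fun p : K × M => p.1 • p.2)
    {N : Set M} (hN : IsOpen N) {m : M} (h0 : ∀ k : K, k • m ∈ N) :
    ∃ W ∈ nhds m, ∀ x ∈ W, ∀ k : K, k • x ∈ N := by
  have hpre : IsOpen ((fun p : K × M => p.1 • p.2) ⁻¹' N) := hc.isOpen_preimage N hN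
  have hmem : ∀ k : K, (k, m) ∈ (fun p : K × M => p.1 • p.2) ⁻¹' N := fun k => h0 k
  choose U V hU hV hkU hmV hUV using fun k : K =>
    isOpen_prod_iff.mp hpre k m (hmem k)
  obtain ⟨t, ht⟩ := IsCompact.elim_finite_subcover isCompact_univ U hU
    (fun k _ => mem_iUnion.mpr ⟨k, hkU k⟩)
  refine ⟨⋂ k ∈ t, V k, ?_, ?_⟩
  · exact (Filter.biInter_finset_mem t).mpr fun k _ => (hV k).mem_nhds (hmV k)
  · intro x hx k
    obtain ⟨i, hi, hki⟩ := by
      have := ht (mem_univ k)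
      simpa using this
    have hxV : x ∈ V i := by
      simp only [mem_iInter] at hx
      exact hx i hi
    exact hUV i (mk_mem_prod hki hxV)

/-- Let `Λ` be a profinite ring, `G` a profinite group, and `M` a
profinite topological `Λ`-module with a continuous `Λ`-linear action of `G`.  Then
every open `Λ`-submodule of `M` contains an open `G`-stable `Λ`-submodule;
consequently `M` has a fundamental system of neighborhoods of `0` consisting of open
`G`-stable `Λ`-submodules. -/
theorem statement12
    (Λ : Type*) [Ring Λ] [TopologicalSpace Λ] [IsTopologicalRing Λ]
    [CompactSpace Λ] [T2Space Λ] [TotallyDisconnectedSpace Λ]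
    (G : Type*) [Group G] [TopologicalSpace G] [IsTopologicalGroup G]
    [CompactSpace G] [T2Space G] [TotallyDisconnectedSpace G]
    (M : Type*) [AddCommGroup M] [Module Λ M] [TopologicalSpace M]
    [IsTopologicalAddGroup M] [CompactSpace M] [T2Space M] [TotallyDisconnectedSpace M]
    [ContinuousSMul Λ M] [DistribMulAction G M] [SMulCommClass G Λ M]
    (hG : Continuous fun p : G × M => p.1 • p.2) :
    (∀ N : Submodule Λ M, IsOpen (N : Set M) →
      ∃ N₀ : Submodule Λ M, IsOpen (N₀ : Set M) ∧ (N₀ : Set M) ⊆ (N : Set M) ∧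
        ∀ g : G, ∀ x ∈ N₀, g • x ∈ N₀) ∧
    (nhds (0 : M)).HasBasis
      (fun N₀ : Submodule Λ M => IsOpen (N₀ : Set M) ∧ ∀ g : G, ∀ x ∈ N₀, g • x ∈ N₀)
      (fun N₀ => (N₀ : Set M)) := by
  -- Part 1
  have part1 : ∀ N : Submodule Λ M, IsOpen (N : Set M) →
      ∃ N₀ : Submodule Λ M, IsOpen (N₀ : Set M) ∧ (N₀ : Set M) ⊆ (N : Set M) ∧
        ∀ g : G, ∀ x ∈ N₀, g • x ∈ N₀ := by
    intro N hN
    set N₀ : Submodule Λ M :=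
      { carrier := {x : M | ∀ g : G, g • x ∈ N}
        add_mem' := fun ha hb g => by
          rw [smul_add]; exact N.add_mem (ha g) (hb g)
        zero_mem' := fun g => by rw [smul_zero]; exact N.zero_mem
        smul_mem' := fun c x hx g => by
          rw [smul_comm]; exact N.smul_mem c (hx g) } with hN₀def
    have hsub : (N₀ : Set M) ⊆ (N : Set M) := fun x hx => by
      have := hx (1 : G); rwa [one_smul] at this
    have hstab : ∀ g : G, ∀ x ∈ N₀, g • x ∈ N₀ := by
      intro g x hx h
      rw [← mul_smul]; exact hx (h * g)
    obtain ⟨W, hWnhds, hW⟩ := aux_smul_nhds hG hN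
      (m := (0 : M)) (fun g => by rw [smul_zero]; exact N.zero_mem)
    have hopen : IsOpen (N₀ : Set M) := by
      have : (N₀ : Set M) ∈ nhds (0 : M) :=
        Filter.mem_of_superset hWnhds (fun x hx g => hW x hx g)
      exact AddSubgroup.isOpen_of_mem_nhds N₀.toAddSubgroup this
    exact ⟨N₀, hopen, hsub, hstab⟩
  refine ⟨part1, ?_⟩
  constructor
  intro s
  constructor
  · intro hs
    obtain ⟨U, hUs, hUopen, hU0⟩ := mem_nhds_iff.mp hs
    obtain ⟨V, hVclopen, hV0, hVU⟩ := compact_exists_isClopen_in_isOpen hUopen hU0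
    obtain ⟨H, hHV⟩ :=
      IsTopologicalAddGroup.exist_openAddSubgroup_sub_clopen_nhds_of_zero hVclopen hV0
    -- Shrink the open additive subgroup H to an open Λ-submodule.
    set N : Submodule Λ M :=
      { carrier := {x : M | ∀ c : Λ, c • x ∈ H.toAddSubgroup}
        add_mem' := fun ha hb c => by
          rw [smul_add]; exact H.toAddSubgroup.add_mem (ha c) (hb c)
        zero_mem' := fun c => by
          rw [smul_zero]; exact H.toAddSubgroup.zero_mem
        smul_mem' := fun c x hx d => by
          rw [smul_smul]; exact hx (d * c) } with hNdef
    have hNsubH : (N : Set M) ⊆ (H : Set M) := fun x hx => by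
      have := hx (1 : Λ); rwa [one_smul] at this
    obtain ⟨W, hWnhds, hW⟩ := aux_smul_nhds (K := Λ) (continuous_smul)
      H.isOpen (m := (0 : M)) (fun c => by
        rw [smul_zero]; exact H.toAddSubgroup.zero_mem)
    have hNopen : IsOpen (N : Set M) := by
      have : (N : Set M) ∈ nhds (0 : M) :=
        Filter.mem_of_superset hWnhds (fun x hx c => hW x hx c)
      exact AddSubgroup.isOpen_of_mem_nhds N.toAddSubgroup this
    obtain ⟨N₀, hN₀open, hN₀sub, hN₀stab⟩ := part1 N hNopen
    exact ⟨N₀, ⟨hN₀open, hN₀stab⟩,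
      (hN₀sub.trans hNsubH).trans (hHV.trans (hVU.trans hUs))⟩
  · rintro ⟨N₀, ⟨hopen, _⟩, hsub⟩
    exact Filter.mem_of_superset (hopen.mem_nhds N₀.zero_mem) hsub
end

section
/- Let G be a profinite group and let M be a compact Hausdorff abelian topological group equipped with a continuous action of G by (additive) automorphisms, i.e., the action map G × M → M is continuous and each g ∈ G acts as a continuous group automorphism. Define an action of G on the Pontryagin dual M^∨ = Hom_cts(M, ℝ/ℤ) (equipped with the compact-open topology, which is discrete since M is compact) by (g·f)(m) = f(g⁻¹·m). Then this action map G × M^∨ → M^∨ is continuous; equivalently, every f ∈ M^∨ is fixed by an open subgroup of G. -/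
lemma aux13 (x : AddCircle (1 : ℝ)) (h : ∀ n : ℕ, ‖n • x‖ < 1/4) : x = 0 := by
  by_contra hx
  induction x using QuotientAddGroup.induction_on with
  | H t => ?_
  set s : ℝ := t - round t with hs
  have hcast : ((round t : ℝ) : AddCircle (1:ℝ)) = 0 := by
    rw [AddCircle.coe_eq_zero_iff]
    exact ⟨round t, by simp⟩
  have hxs : (t : AddCircle (1:ℝ)) = (s : AddCircle (1:ℝ)) := by
    rw [hs, AddCircle.coe_sub, hcast, sub_zero]
  have hnorm : ‖(t : AddCircle (1:ℝ))‖ = |s| := by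
    rw [AddCircle.norm_eq]; simp [hs]
  set u : ℝ := |s| with hu
  have hu0 : 0 < u := by
    rcases eq_or_lt_of_le (abs_nonneg s) with h'|h'
    · exfalso; apply hx
      rw [hxs, show s = 0 from by simpa using h'.symm]
      simp
    · exact h'
  have hu4 : u < 1/4 := by
    have := h 1
    rwa [one_smul, hnorm] at this
  -- multiples: n • x = ((n * u or n * (-u)) : AddCircle 1), norm = ‖(n*u : ℝ)‖ coe
  have hmul : ∀ n : ℕ, ‖(n : ℕ) • (t : AddCircle (1:ℝ))‖ = ‖((n * u : ℝ) : AddCircle (1:ℝ))‖ := by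
    intro n
    rcases abs_cases s with ⟨h1, _⟩ | ⟨h1, _⟩
    · rw [hxs, ← AddCircle.coe_nsmul, hu, h1, nsmul_eq_mul]
    · rw [hxs, ← AddCircle.coe_nsmul, hu, h1]
      rw [show ((n : ℝ) * -s) = -((n:ℕ) • s) from by simp,
        AddCircle.coe_neg, norm_neg, AddCircle.coe_nsmul]
  set n : ℕ := ⌈1 / (4 * u)⌉₊ with hn
  have h1 : 1 / (4 * u) ≤ (n : ℝ) := Nat.le_ceil _
  have h2 : (n : ℝ) < 1 / (4 * u) + 1 := by
    apply Nat.ceil_lt_add_one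
    positivity
  have hge : 1/4 ≤ n * u := by
    rw [div_le_iff₀ (by positivity)] at h1
    linarith [h1]
  have hlt : n * u < 1/2 := by
    have : (n : ℝ) * u < (1 / (4*u) + 1) * u := by
      apply mul_lt_mul_of_pos_right h2 hu0
    have e : (1 / (4*u) + 1) * u = 1/4 + u := by field_simp
    rw [e] at this; linarith
  have habs : ‖((n * u : ℝ) : AddCircle (1:ℝ))‖ = |n * u| := by
    rw [AddCircle.norm_coe_eq_abs_iff _ one_ne_zero]
    rw [abs_of_nonneg (by positivity), abs_one]
    linarith
  have := h n
  rw [hmul n, habs, abs_of_nonneg (by positivity)] at this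
  linarith


set_option maxHeartbeats 1000000

/-- Let `G` be a profinite group and `M` a compact Hausdorff abelian
topological group with a continuous action of `G` by additive automorphisms.  Then the
induced `G`-action on the Pontryagin dual `M^∨ = Hom_cts(M, ℝ/ℤ)` (which is discrete)
is continuous; equivalently, every continuous homomorphism `f : M → ℝ/ℤ` is fixed by
an open subgroup of `G`. -/
theorem statement13
    (G : Type*) [Group G] [TopologicalSpace G] [IsTopologicalGroup G]
    [CompactSpace G] [T2Space G] [TotallyDisconnectedSpace G]
    (M : Type*) [AddCommGroup M] [TopologicalSpace M] [IsTopologicalAddGroup M]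
    [CompactSpace M] [T2Space M] [DistribMulAction G M]
    (hact : Continuous fun p : G × M => p.1 • p.2)
    (f : M →+ AddCircle (1 : ℝ)) (hf : Continuous f) :
    ∃ U : Subgroup G, IsOpen (U : Set G) ∧ ∀ u ∈ U, ∀ m : M, f (u • m) = f m := by
  classical
  set V : Set (AddCircle (1:ℝ)) := {x | ‖x‖ < 1/4} with hV
  have hVopen : IsOpen V := isOpen_lt continuous_norm continuous_const
  set F : G × M → AddCircle (1:ℝ) := fun p => f (p.1 • p.2) - f p.2 with hF
  have hFcont : Continuous F := (hf.comp hact).sub (hf.comp continuous_snd)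
  have hS : IsOpen (F ⁻¹' V) := hVopen.preimage hFcont
  have hsub : ({1} : Set G) ×ˢ (Set.univ : Set M) ⊆ F ⁻¹' V := by
    rintro ⟨g, m⟩ ⟨hg, -⟩
    simp only [Set.mem_singleton_iff] at hg
    simp [hF, hV, hg]
  obtain ⟨u, w, huo, -, h1u, huniv, huw⟩ :=
    generalized_tube_lemma isCompact_singleton isCompact_univ hS hsub
  obtain ⟨W, hWclopen, h1W, hWu⟩ :=
    compact_exists_isClopen_in_isOpen huo (h1u rfl)
  obtain ⟨H, hH⟩ :=
    IsTopologicalGroup.exist_openNormalSubgroup_sub_clopen_nhds_of_one hWclopen h1W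
  refine ⟨H.toSubgroup, H.isOpen, fun g hg m => ?_⟩
  have key : ∀ m' : M, f (g • m') - f m' ∈ V := by
    intro m'
    have : (g, m') ∈ u ×ˢ w := ⟨hWu (hH hg), huniv (Set.mem_univ m')⟩
    simpa only [hF, Set.mem_preimage] using huw this
  set ψ : M →+ AddCircle (1:ℝ) :=
    f.comp (DistribMulAction.toAddMonoidHom M g) - f with hψ
  have hψ' : ∀ m' : M, ψ m' = f (g • m') - f m' := by
    intro m'
    simp [hψ, AddMonoidHom.sub_apply, AddMonoidHom.comp_apply,
      DistribMulAction.toAddMonoidHom_apply]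
  have hz : ψ m = 0 := by
    apply aux13
    intro n
    have e : (n : ℕ) • ψ m = ψ (n • m) := (map_nsmul ψ n m).symm
    rw [e, hψ']
    simpa [hV] using key (n • m)
  rw [hψ'] at hz
  exact sub_eq_zero.mp hz
end

section
/- Let R be a commutative ring, G a group, Q a finite group, and φ : G → Q a group homomorphism. Let M be an R-module equipped with an action of G by R-linear automorphisms. Equip R[Q] ⊗_R M with the G-action g·(q ⊗ x) = (φ(g)q) ⊗ (g·x) and equip Hom_R(R[Q], M) with the G-action (g·f)(q) = g·(f(φ(g)⁻¹q)). Then the map R[Q] ⊗_R M → Hom_R(R[Q], M) sending β ⊗ x (for β ∈ Q, x ∈ M) to the R-linear map determined on the basis Q of R[Q] by β' ↦ x if β' = β and β' ↦ 0 otherwise, is an isomorphism of R[G]-modules, and it is functorial (natural) in M. -/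
open scoped TensorProduct

section ThetaSetup

variable (R Q : Type*) [CommRing R] [Group Q] [Fintype Q]

/-- The canonical `R`-bilinear pairing `R[Q] × R[Q] → R`, `(y, z) ↦ ∑_{q ∈ Q} y_q z_q`. -/
noncomputable def groupAlgebraPairing :
    MonoidAlgebra R Q →ₗ[R] MonoidAlgebra R Q →ₗ[R] R :=
  LinearMap.mk₂ R (fun y z => ∑ q : Q, y.coeff q * z.coeff q)
    (fun y y' z => by
      rw [← Finset.sum_add_distrib]
      exact Finset.sum_congr rfl fun q _ => by
        rw [show (y + y').coeff q = y.coeff q + y'.coeff q from Finsupp.add_apply y.coeff y'.coeff q, add_mul])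
    (fun r y z => by
      rw [smul_eq_mul, Finset.mul_sum]
      exact Finset.sum_congr rfl fun q _ => by
        rw [show (r • y).coeff q = r * y.coeff q from rfl, mul_assoc])
    (fun y z z' => by
      rw [← Finset.sum_add_distrib]
      exact Finset.sum_congr rfl fun q _ => by
        rw [show (z + z').coeff q = z.coeff q + z'.coeff q from Finsupp.add_apply z.coeff z'.coeff q, mul_add])
    (fun r y z => by
      rw [smul_eq_mul, Finset.mul_sum]
      exact Finset.sum_congr rfl fun q _ => by
        rw [show (r • z).coeff q = r * z.coeff q from rfl, mul_left_comm])

variable (M : Type*) [AddCommGroup M] [Module R M]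

/-- The canonical `R`-linear map `R[Q] ⊗_R M → Hom_R(R[Q], M)` sending `β ⊗ x`
(for `β ∈ Q`, `x ∈ M`) to the `R`-linear map determined on the basis `Q` by
`β' ↦ x` if `β' = β` and `β' ↦ 0` otherwise. -/
noncomputable def theta :
    MonoidAlgebra R Q ⊗[R] M →ₗ[R] (MonoidAlgebra R Q →ₗ[R] M) :=
  TensorProduct.lift
    (LinearMap.mk₂ R (fun y x => (groupAlgebraPairing R Q y).smulRight x)
      (fun y y' x => by ext z; simp [add_smul])
      (fun r y x => by ext z; simp [mul_smul])
      (fun y x x' => by ext z; simp [smul_add])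
      (fun r y x => by ext z; exact smul_comm _ r x))

end ThetaSetup


section Aux

variable (R Q : Type*) [CommRing R] [Group Q] [Fintype Q]
variable (M : Type*) [AddCommGroup M] [Module R M]

lemma theta_tmul (y : MonoidAlgebra R Q) (x : M) (z : MonoidAlgebra R Q) :
    theta R Q M (y ⊗ₜ[R] x) z = (∑ q : Q, y.coeff q * z.coeff q) • x := by
  simp [theta, groupAlgebraPairing]

lemma theta_single [DecidableEq Q] (β β' : Q) (x : M) :
    theta R Q M (MonoidAlgebra.single β (1 : R) ⊗ₜ[R] x) (MonoidAlgebra.single β' 1) =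
      if β' = β then x else 0 := by
  rw [theta_tmul]
  classical
  have : (∑ q : Q, (MonoidAlgebra.single β (1 : R)).coeff q * (MonoidAlgebra.single β' (1 : R)).coeff q)
      = if β' = β then (1 : R) else 0 := by
    simp [MonoidAlgebra.coeff_single, Finsupp.single_apply, Finset.sum_ite_eq, eq_comm]
  rw [this]
  split <;> simp

noncomputable def thetaInv : (MonoidAlgebra R Q →ₗ[R] M) → MonoidAlgebra R Q ⊗[R] M :=
  fun f => ∑ β : Q, MonoidAlgebra.single β (1 : R) ⊗ₜ[R] f (MonoidAlgebra.single β 1)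

omit [Group Q] in
lemma thetaInv_add (f g : MonoidAlgebra R Q →ₗ[R] M) :
    thetaInv R Q M (f + g) = thetaInv R Q M f + thetaInv R Q M g := by
  simp [thetaInv, TensorProduct.tmul_add, Finset.sum_add_distrib]

lemma theta_leftInverse : Function.LeftInverse (thetaInv R Q M) (theta R Q M) := by
  classical
  intro t
  induction t using TensorProduct.induction_on with
  | zero => simp [thetaInv]
  | tmul y x =>
    have : thetaInv R Q M (theta R Q M (y ⊗ₜ[R] x))
        = ∑ β : Q, (MonoidAlgebra.single β (y.coeff β)) ⊗ₜ[R] x := by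
      refine Finset.sum_congr rfl fun β _ => ?_
      rw [theta_tmul]
      have : (∑ q : Q, y.coeff q * (MonoidAlgebra.single β (1 : R)).coeff q) = y.coeff β := by
        simp [MonoidAlgebra.coeff_single, Finsupp.single_apply, Finset.sum_ite_eq]
      rw [this, TensorProduct.tmul_smul, TensorProduct.smul_tmul']
      congr 1
      simp [MonoidAlgebra.smul_single']
    rw [this, ← TensorProduct.sum_tmul]
    congr 1
    conv_rhs => rw [← MonoidAlgebra.sum_coeff_single y]
    rw [Finsupp.sum_fintype _ _ (by simp)]
  | add a b ha hb =>
    rw [map_add, thetaInv_add, ha, hb]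

lemma theta_rightInverse : Function.RightInverse (thetaInv R Q M) (theta R Q M) := by
  classical
  intro f
  apply MonoidAlgebra.lhom_ext'
  intro q
  apply LinearMap.ext
  intro r
  simp only [LinearMap.coe_comp, Function.comp_apply, MonoidAlgebra.lsingle_apply]
  have hz : (MonoidAlgebra.single q r : MonoidAlgebra R Q) = r • MonoidAlgebra.single q 1 := by
    simp [MonoidAlgebra.smul_single']
  rw [hz, map_smul, map_smul]
  congr 1
  rw [thetaInv, map_sum]
  have : ∀ β : Q, (theta R Q M (MonoidAlgebra.single β (1:R) ⊗ₜ[R] f (MonoidAlgebra.single β 1)))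
      (MonoidAlgebra.single q 1) = if q = β then f (MonoidAlgebra.single β 1) else 0 := by
    intro β
    exact theta_single R Q M β q _
  rw [LinearMap.sum_apply]
  calc ∑ β : Q, (theta R Q M (MonoidAlgebra.single β (1:R) ⊗ₜ[R] f (MonoidAlgebra.single β 1)))
        (MonoidAlgebra.single q 1)
      = ∑ β : Q, if q = β then f (MonoidAlgebra.single β 1) else 0 :=
        Finset.sum_congr rfl fun β _ => this β
    _ = f (MonoidAlgebra.single q 1) := by rw [Finset.sum_ite_eq]; simp

end Aux

universe v

/-- Let `R` be a commutative ring, `G` a group, `Q` a finite group,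
`φ : G → Q` a homomorphism, and `M` an `R`-module with an action of `G` by `R`-linear
automorphisms.  The canonical map `θ : R[Q] ⊗_R M → Hom_R(R[Q], M)`, given on
generators by sending `β ⊗ x` to the map `β' ↦ (if β' = β then x else 0)`, is an
isomorphism of `R[G]`-modules (bijective, and `G`-equivariant for the actions
`g·(q ⊗ x) = φ(g)q ⊗ g·x` and `(g·f)(q) = g·f(φ(g)⁻¹q)`), and it is natural in `M`. -/
theorem statement17
    (R Q G : Type*) [CommRing R] [Group Q] [Fintype Q] [DecidableEq Q] [Group G]
    (φ : G →* Q)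
    (M : Type v) [AddCommGroup M] [Module R M]
    [DistribMulAction G M] [SMulCommClass G R M] :
    Function.Bijective (theta R Q M) ∧
    (∀ (β β' : Q) (x : M),
      theta R Q M (MonoidAlgebra.single β (1 : R) ⊗ₜ[R] x) (MonoidAlgebra.single β' 1) =
        if β' = β then x else 0) ∧
    (∀ (g : G) (β : Q) (x : M) (q : Q),
      theta R Q M (MonoidAlgebra.single (φ g * β) (1 : R) ⊗ₜ[R] (g • x))
          (MonoidAlgebra.single q 1) =
        g • theta R Q M (MonoidAlgebra.single β (1 : R) ⊗ₜ[R] x)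
          (MonoidAlgebra.single ((φ g)⁻¹ * q) 1)) ∧
    (∀ (M' : Type v) [AddCommGroup M'] [Module R M']
      [DistribMulAction G M'] [SMulCommClass G R M']
      (h : M →ₗ[R] M'), (∀ (g : G) (x : M), h (g • x) = g • h x) →
      ∀ t : MonoidAlgebra R Q ⊗[R] M,
        theta R Q M' (LinearMap.lTensor (MonoidAlgebra R Q) h t) =
          h.comp (theta R Q M t)) := by
    classical
  refine ⟨⟨(theta_leftInverse R Q M).injective, (theta_rightInverse R Q M).surjective⟩,
    fun β β' x => theta_single R Q M β β' x, ?_, ?_⟩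
  · intro g β x q
    rw [theta_single, theta_single, smul_ite, smul_zero]
    congr 1
    exact (propext inv_mul_eq_iff_eq_mul).symm
  · intro M' _ _ _ _ h hG t
    induction t using TensorProduct.induction_on with
    | zero => simp
    | tmul y x =>
      ext z
      simp only [LinearMap.lTensor_tmul, LinearMap.coe_comp, Function.comp_apply]
      rw [theta_tmul, theta_tmul, map_smul]
    | add a b ha hb => simp_all [map_add, LinearMap.comp_add]
end
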